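/- Let 𝕜 be a field, V and W vector spaces over 𝕜, and v ∈ V ⊗ W. Suppose v = Σ_{i=1}^{r} u_i ⊗ w_i where (u_1,…,u_r) is a basis of the left minimal subspace U_V(v) (i.e. the u_i are linearly independent and span U_V(v)). Then (w_1,…,w_r) is a basis of the right minimal subspace U_W(v): the w_i are linearly independent and U_W(v) = span{w_1,…,w_r}. -/

import Mathlib

open scoped TensorProduct

section
variable (𝕜 : Type*) [Field 𝕜]

/-- The contraction `id_V ⊗ φ : V ⊗ W → V`, sending `x ⊗ y` to `φ(y) • x`. -/
noncomputable def rContract (V W : Type*) [AddCommGroup V] [Module 𝕜 V]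
    [AddCommGroup W] [Module 𝕜 W] (φ : W →ₗ[𝕜] 𝕜) : V ⊗[𝕜] W →ₗ[𝕜] V :=
  (TensorProduct.rid 𝕜 V).toLinearMap ∘ₗ TensorProduct.map LinearMap.id φ

/-- The contraction `ψ ⊗ id_W : V ⊗ W → W`, sending `x ⊗ y` to `ψ(x) • y`. -/
noncomputable def lContract (V W : Type*) [AddCommGroup V] [Module 𝕜 V]
    [AddCommGroup W] [Module 𝕜 W] (ψ : V →ₗ[𝕜] 𝕜) : V ⊗[𝕜] W →ₗ[𝕜] W :=
  (TensorProduct.lid 𝕜 W).toLinearMap ∘ₗ TensorProduct.map ψ LinearMap.id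

/-- The left minimal subspace `U_V(v)` of `v ∈ V ⊗ W`: the span of all contractions
`(id_V ⊗ φ)(v)` with `φ` in the algebraic dual of `W`. -/
noncomputable def leftMin (V W : Type*) [AddCommGroup V] [Module 𝕜 V]
    [AddCommGroup W] [Module 𝕜 W] (v : V ⊗[𝕜] W) : Submodule 𝕜 V :=
  Submodule.span 𝕜 {x | ∃ φ : W →ₗ[𝕜] 𝕜, rContract 𝕜 V W φ v = x}

/-- The right minimal subspace `U_W(v)` of `v ∈ V ⊗ W`: the span of all contractions
`(ψ ⊗ id_W)(v)` with `ψ` in the algebraic dual of `V`. -/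
noncomputable def rightMin (V W : Type*) [AddCommGroup V] [Module 𝕜 V]
    [AddCommGroup W] [Module 𝕜 W] (v : V ⊗[𝕜] W) : Submodule 𝕜 W :=
  Submodule.span 𝕜 {y | ∃ ψ : V →ₗ[𝕜] 𝕜, lContract 𝕜 V W ψ v = y}

end

section
variable {𝕜 V W : Type*} [Field 𝕜] [AddCommGroup V] [Module 𝕜 V]
  [AddCommGroup W] [Module 𝕜 W]

/-- **Bases of the minimal subspaces from a minimal representation.**
If `v = ∑ i, u i ⊗ w i` where `(u i)` is a basis of the left minimal subspace `U_V(v)`,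
then `(w i)` is a basis of the right minimal subspace `U_W(v)`. -/
theorem rightMin_basis_of_leftMin_basis {r : ℕ} (u : Fin r → V) (w : Fin r → W)
    (v : V ⊗[𝕜] W) (hv : v = ∑ i, u i ⊗ₜ[𝕜] w i)
    (hu_li : LinearIndependent 𝕜 u)
    (hu_span : Submodule.span 𝕜 (Set.range u) = leftMin 𝕜 V W v) :
    LinearIndependent 𝕜 w ∧ rightMin 𝕜 V W v = Submodule.span 𝕜 (Set.range w) := by
  classical
  have hl : ∀ ψ : V →ₗ[𝕜] 𝕜, lContract 𝕜 V W ψ v = ∑ i, ψ (u i) • w i := by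
    intro ψ
    simp [hv, lContract, map_sum]
  have hr : ∀ φ : W →ₗ[𝕜] 𝕜, rContract 𝕜 V W φ v = ∑ i, φ (w i) • u i := by
    intro φ
    simp [hv, rContract, map_sum]
  -- dual family for u
  have hdual : ∀ j, ∃ ψ : V →ₗ[𝕜] 𝕜, ∀ i, ψ (u i) = if i = j then 1 else 0 := by
    intro j
    have ls : LinearIndepOn 𝕜 id (Set.range u) := (linearIndepOn_id_range_iff hu_li.injective).mpr hu_li
    let b := Module.Basis.extend ls
    have hmem : ∀ i, u i ∈ ls.extend (Set.subset_univ _) :=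
      fun i => ls.subset_extend _ ⟨i, rfl⟩
    refine ⟨b.coord ⟨u j, hmem j⟩, fun i => ?_⟩
    have hb : b ⟨u i, hmem i⟩ = u i := Module.Basis.extend_apply_self ls ⟨u i, hmem i⟩
    rw [← hb, Module.Basis.coord_apply, Module.Basis.repr_self]
    simp [Finsupp.single_apply, Subtype.ext_iff, hu_li.injective.eq_iff, eq_comm]
  -- the linear map φ ↦ (id ⊗ φ)(v)
  let T : (W →ₗ[𝕜] 𝕜) →ₗ[𝕜] V :=
    { toFun := fun φ => ∑ i, φ (w i) • u i
      map_add' := fun φ φ' => by simp [add_smul, Finset.sum_add_distrib]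
      map_smul' := fun c φ => by simp [mul_smul, Finset.smul_sum] }
  have hleft : leftMin 𝕜 V W v = LinearMap.range T := by
    have hset : {x | ∃ φ : W →ₗ[𝕜] 𝕜, rContract 𝕜 V W φ v = x} = Set.range T := by
      ext x
      simp only [Set.mem_setOf_eq, Set.mem_range, hr]
      rfl
    rw [leftMin, hset, ← LinearMap.coe_range, Submodule.span_eq]
  -- linear independence of w
  have hw_li : LinearIndependent 𝕜 w := by
    rw [Fintype.linearIndependent_iff]
    intro g hg j
    have huj : u j ∈ leftMin 𝕜 V W v := by
      rw [← hu_span]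
      exact Submodule.subset_span ⟨j, rfl⟩
    rw [hleft] at huj
    obtain ⟨φ, hφ⟩ := huj
    have hφu : ∑ i, φ (w i) • u i = u j := hφ
    have hcoef : ∀ i, φ (w i) = if i = j then 1 else 0 := by
      have h0 : ∑ i, (φ (w i) - if i = j then 1 else 0) • u i = 0 := by
        simp only [sub_smul, Finset.sum_sub_distrib, hφu, ite_smul, one_smul, zero_smul]
        simp
      intro i
      exact sub_eq_zero.mp ((Fintype.linearIndependent_iff.mp hu_li) _ h0 i)
    have := congrArg φ hg
    simp only [map_sum, map_smul, map_zero, smul_eq_mul] at this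
    calc g j = ∑ i, g i * φ (w i) := by
            simp [hcoef, mul_ite, Finset.sum_ite_eq']
      _ = 0 := this
  refine ⟨hw_li, le_antisymm ?_ ?_⟩
  · rw [rightMin]
    apply Submodule.span_le.mpr
    rintro y ⟨ψ, rfl⟩
    rw [hl ψ]
    exact Submodule.sum_mem _ fun i _ =>
      Submodule.smul_mem _ _ (Submodule.subset_span ⟨i, rfl⟩)
  · apply Submodule.span_le.mpr
    rintro y ⟨j, rfl⟩
    obtain ⟨ψ, hψ⟩ := hdual j
    apply Submodule.subset_span
    refine ⟨ψ, ?_⟩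
    rw [hl ψ]
    simp [hψ, ite_smul]


end
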